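/- Let H = (F,G) be a formal transformation with invertible Jacobian mapping an m-infinite type hypersurface in normal form into another such. Then G_z(0,w) = O(w^{m+1}), i.e. the coefficient of z in G vanishes to order at least m+1 in w. -/

import Mathlib

/-!
STATEMENT 0. A formal invertible transformation `H = (F, G)` of `(ℂ², 0)` mapping a
hypersurface `M : w = τ + i τ^m (ε z χ + ∑_{k,l≥2} Θ_{kl}(τ) z^k χ^l)` (complexified
defining equation, normal coordinates, `χ = z̄`, `τ = w̄`) into another such hypersurface
`M*` satisfies `G(z, 0) = 0`, i.e. `G = O(w)`.
-/

noncomputable section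

open scoped Classical

/-- Coefficientwise substitution of a tuple of multivariate power series into a power
series in `Fin k` variables.  (When each `a i` has vanishing constant term, only finitely
many terms contribute to each coefficient, and this is the usual composition.) -/
def msubst {σ : Type} {k : ℕ} (a : Fin k → MvPowerSeries σ ℂ)
    (f : MvPowerSeries (Fin k) ℂ) : MvPowerSeries σ ℂ :=
  fun d => ∑' e : Fin k →₀ ℕ,
    (MvPowerSeries.coeff e f) * MvPowerSeries.coeff d (∏ i, a i ^ e i)

/-- The exponent `(k, l, j)` for the monomial `z^k χ^l τ^j` in three variables. -/
def idx (k l j : ℕ) : Fin 3 →₀ ℕ :=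
  Finsupp.single 0 k + Finsupp.single 1 l + Finsupp.single 2 j

/-- `ρ` is the complex defining series, in admissible normal coordinates, of an
`m`-infinite type hypersurface: `w = ρ(z, χ, τ) = τ + i τ^m (ε z χ + ∑_{k,l≥2} Θ_{kl}(τ) z^k χ^l)`. -/
def IsDefiningSeries (m : ℕ) (ε : ℤ) (Θ : ℕ → ℕ → PowerSeries ℂ)
    (ρ : MvPowerSeries (Fin 3) ℂ) : Prop :=
  ∀ k l j : ℕ, MvPowerSeries.coeff (idx k l j) ρ =
    if k = 0 ∧ l = 0 then (if j = 1 then 1 else 0)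
    else if k = 1 ∧ l = 1 then (if j = m then Complex.I * (ε : ℂ) else 0)
    else if 2 ≤ k ∧ 2 ≤ l then
      (if m ≤ j then Complex.I * PowerSeries.coeff (j - m) (Θ k l) else 0)
    else 0

/-- The conjugate formal power series (coefficients conjugated). -/
def conj2 (F : MvPowerSeries (Fin 2) ℂ) : MvPowerSeries (Fin 2) ℂ :=
  MvPowerSeries.map (starRingEnd ℂ) F

/-- The complexified mapping condition `H(M) ⊂ M*` for a formal map `H = (F, G)`:
`G(z, ρ(z,χ,τ)) = ρ*(F(z, ρ(z,χ,τ)), F̄(χ,τ), Ḡ(χ,τ))` as formal power series in `(z,χ,τ)`. -/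
def MapsInto (F G : MvPowerSeries (Fin 2) ℂ) (ρ ρs : MvPowerSeries (Fin 3) ℂ) : Prop :=
  msubst ![MvPowerSeries.X 0, ρ] G =
    msubst ![msubst ![MvPowerSeries.X 0, ρ] F,
             msubst ![MvPowerSeries.X 1, MvPowerSeries.X 2] (conj2 F),
             msubst ![MvPowerSeries.X 1, MvPowerSeries.X 2] (conj2 G)] ρs

namespace FormalAux
open MvPowerSeries
open MvPowerSeries

lemma coeff_msubst {σ : Type} {k : ℕ} (a : Fin k → MvPowerSeries σ ℂ)
    (f : MvPowerSeries (Fin k) ℂ) (d : σ →₀ ℕ) :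
    MvPowerSeries.coeff d (msubst a f) =
      ∑' e : Fin k →₀ ℕ,
        (MvPowerSeries.coeff e f) * MvPowerSeries.coeff d (∏ i, a i ^ e i) := rfl

lemma fin3_eq_iff (d e : Fin 3 →₀ ℕ) :
    d = e ↔ d 0 = e 0 ∧ d 1 = e 1 ∧ d 2 = e 2 := by
  constructor
  · rintro rfl; exact ⟨rfl, rfl, rfl⟩
  · rintro ⟨h0, h1, h2⟩; ext i; fin_cases i <;> assumption

lemma fin2_eq_iff (d e : Fin 2 →₀ ℕ) :
    d = e ↔ d 0 = e 0 ∧ d 1 = e 1 := by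
  constructor
  · rintro rfl; exact ⟨rfl, rfl⟩
  · rintro ⟨h0, h1⟩; ext i; fin_cases i <;> assumption

lemma idx_app0 (k l j : ℕ) : idx k l j 0 = k := by
  simp [idx, Finsupp.single_apply]

lemma idx_app1 (k l j : ℕ) : idx k l j 1 = l := by
  simp [idx, Finsupp.single_apply]

lemma idx_app2 (k l j : ℕ) : idx k l j 2 = j := by
  simp [idx, Finsupp.single_apply]

lemma fin3_eq (d : Fin 3 →₀ ℕ) : d = idx (d 0) (d 1) (d 2) := by
  rw [fin3_eq_iff, idx_app0, idx_app1, idx_app2]; exact ⟨rfl, rfl, rfl⟩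

open MvPowerSeries

variable {m : ℕ} {ε : ℤ} {Θ : ℕ → ℕ → PowerSeries ℂ} {ρ : MvPowerSeries (Fin 3) ℂ}

lemma coeff_rho_chi0 (hρ : IsDefiningSeries m ε Θ ρ) (u : Fin 3 →₀ ℕ) (hu : u 1 = 0) :
    MvPowerSeries.coeff u ρ = if u 0 = 0 ∧ u 2 = 1 then 1 else 0 := by
  have h := hρ (u 0) (u 1) (u 2)
  rw [← fin3_eq] at h
  rw [h, hu]
  split_ifs <;> simp_all <;> omega

lemma coeff_rho_pow (hρ : IsDefiningSeries m ε Θ ρ) :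
    ∀ (n : ℕ) (d : Fin 3 →₀ ℕ), d 1 = 0 →
      MvPowerSeries.coeff d (ρ ^ n) = if d 0 = 0 ∧ d 2 = n then 1 else 0 := by
  intro n
  induction n with
  | zero =>
    intro d hd
    rw [pow_zero, MvPowerSeries.coeff_one]
    congr 1
    simp only [eq_iff_iff]
    rw [fin3_eq_iff]
    simp [hd]
  | succ n ih =>
    intro d hd
    rw [pow_succ', MvPowerSeries.coeff_mul]
    have key : ∀ p ∈ Finset.HasAntidiagonal.antidiagonal d,
        MvPowerSeries.coeff p.1 ρ * MvPowerSeries.coeff p.2 (ρ ^ n)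
        = if p = (Finsupp.single 2 1, Finsupp.single 2 n) then 1 else 0 := by
      intro p hp
      rw [Finset.HasAntidiagonal.mem_antidiagonal] at hp
      have h1 : p.1 1 = 0 ∧ p.2 1 = 0 := by
        have := congrArg (fun f : Fin 3 →₀ ℕ => f 1) hp
        simp only [Finsupp.add_apply, hd] at this
        omega
      rw [coeff_rho_chi0 hρ p.1 h1.1, ih p.2 h1.2]
      have heq : p = (Finsupp.single 2 1, Finsupp.single 2 n) ↔
          ((p.1 0 = 0 ∧ p.1 2 = 1) ∧ (p.2 0 = 0 ∧ p.2 2 = n)) := by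
        rw [Prod.ext_iff, fin3_eq_iff, fin3_eq_iff]
        simp [Finsupp.single_apply, h1.1, h1.2]
      split_ifs with hA hB hB <;> simp_all
    rw [Finset.sum_congr rfl key, Finset.sum_ite_eq' (Finset.HasAntidiagonal.antidiagonal d)]
    have hmem : (Finsupp.single (2 : Fin 3) 1, Finsupp.single (2 : Fin 3) n)
        ∈ Finset.HasAntidiagonal.antidiagonal d ↔ (d 0 = 0 ∧ d 2 = n + 1) := by
      rw [Finset.HasAntidiagonal.mem_antidiagonal]
      rw [eq_comm, fin3_eq_iff]
      simp [Finsupp.single_apply, hd]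
      omega
    split_ifs with h1 h2 h2 <;> simp_all

open MvPowerSeries

variable {m : ℕ} {ε : ℤ} {Θ : ℕ → ℕ → PowerSeries ℂ} {ρ : MvPowerSeries (Fin 3) ℂ}

lemma lhs_coeff (hρ : IsDefiningSeries m ε Θ ρ) (G : MvPowerSeries (Fin 2) ℂ) (j : ℕ) :
    MvPowerSeries.coeff (idx 1 0 j) (msubst ![MvPowerSeries.X 0, ρ] G) =
      MvPowerSeries.coeff (Finsupp.single 0 1 + Finsupp.single 1 j) G := by
  rw [coeff_msubst]
  have hterm : ∀ e : Fin 2 →₀ ℕ,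
      MvPowerSeries.coeff (idx 1 0 j) (∏ i, ![MvPowerSeries.X 0, ρ] i ^ e i)
      = if e = Finsupp.single 0 1 + Finsupp.single 1 j then 1 else 0 := by
    intro e
    rw [Fin.prod_univ_two]
    simp only [Matrix.cons_val_zero, Matrix.cons_val_one, Matrix.head_cons]
    rw [MvPowerSeries.X_pow_eq, MvPowerSeries.coeff_monomial_mul]
    have hle : Finsupp.single (0 : Fin 3) (e 0) ≤ idx 1 0 j ↔ e 0 ≤ 1 := by
      rw [Finsupp.le_iff]
      constructor
      · intro h
        by_cases h0 : e 0 = 0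
        · omega
        · have := h 0 (by simp [Finsupp.single_apply, h0])
          simpa [Finsupp.single_apply, idx_app0] using this
      · intro h i hi
        fin_cases i <;>
          simp_all [Finsupp.single_apply, idx_app0, idx_app1, idx_app2]
    have hcond : (e = Finsupp.single 0 1 + Finsupp.single 1 j) ↔ (e 0 = 1 ∧ e 1 = j) := by
      rw [fin2_eq_iff]; simp [Finsupp.single_apply]
    split_ifs with h1 h2 h2
    · -- e 0 ≤ 1, e = single..
      rw [hcond] at h2
      rw [coeff_rho_pow hρ]
      · rw [if_pos]
        · ring
        · constructor <;> simp [Finsupp.tsub_apply, idx_app0, idx_app2, Finsupp.single_apply, h2.1, h2.2]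
      · simp [Finsupp.tsub_apply, idx_app1, Finsupp.single_apply]
    · rw [coeff_rho_pow hρ]
      · rw [if_neg]
        · ring
        · rw [hcond] at h2
          intro hc
          apply h2
          rcases hc with ⟨hc0, hc2⟩
          rw [Finsupp.tsub_apply, idx_app0, Finsupp.single_apply] at hc0
          rw [Finsupp.tsub_apply, idx_app2, Finsupp.single_apply] at hc2
          simp at hc0 hc2
          rw [hle] at h1
          constructor <;> omega
      · simp [Finsupp.tsub_apply, idx_app1, Finsupp.single_apply]
    · exfalso
      rw [hcond] at h2
      rw [hle] at h1
      omega
    · rfl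
  rw [tsum_congr (fun e => by rw [hterm e])]
  rw [tsum_eq_single (Finsupp.single 0 1 + Finsupp.single 1 j)]
  · simp
  · intro b hb; simp [hb]

open MvPowerSeries

lemma coeff_X12 (f : MvPowerSeries (Fin 2) ℂ) (u : Fin 3 →₀ ℕ) (hu : u 0 ≠ 0) :
    MvPowerSeries.coeff u
      (msubst ![MvPowerSeries.X 1, MvPowerSeries.X 2] f) = 0 := by
  rw [coeff_msubst]
  have hterm : ∀ e : Fin 2 →₀ ℕ,
      (MvPowerSeries.coeff e f) * MvPowerSeries.coeff u
        (∏ i, ![MvPowerSeries.X 1, MvPowerSeries.X 2] i ^ e i) = 0 := by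
    intro e
    rw [Fin.prod_univ_two]
    simp only [Matrix.cons_val_zero, Matrix.cons_val_one, Matrix.head_cons]
    rw [MvPowerSeries.X_pow_eq, MvPowerSeries.X_pow_eq,
      MvPowerSeries.monomial_mul_monomial, MvPowerSeries.coeff_monomial]
    rw [if_neg, mul_zero]
    intro hc
    apply hu
    rw [hc]
    simp [Finsupp.single_apply]
  rw [tsum_congr hterm, tsum_zero]

lemma coeff0_X12 (f : MvPowerSeries (Fin 2) ℂ) :
    MvPowerSeries.coeff (0 : Fin 3 →₀ ℕ)
      (msubst ![MvPowerSeries.X 1, MvPowerSeries.X 2] f) =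
      MvPowerSeries.coeff 0 f := by
  rw [coeff_msubst]
  rw [tsum_eq_single (0 : Fin 2 →₀ ℕ)]
  · rw [Fin.prod_univ_two]
    simp only [Matrix.cons_val_zero, Matrix.cons_val_one, Matrix.head_cons,
      Finsupp.coe_zero, Pi.zero_apply, pow_zero, one_mul]
    simp
  · intro e he
    rw [Fin.prod_univ_two]
    simp only [Matrix.cons_val_zero, Matrix.cons_val_one, Matrix.head_cons]
    rw [MvPowerSeries.X_pow_eq, MvPowerSeries.X_pow_eq,
      MvPowerSeries.monomial_mul_monomial, MvPowerSeries.coeff_monomial]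
    rw [if_neg, mul_zero]
    intro hc
    apply he
    have hall := Finsupp.ext_iff.mp hc.symm
    have h1 := hall 1
    have h2 := hall 2
    simp [Finsupp.single_apply] at h1 h2
    rw [fin2_eq_iff]
    simp [h1, h2]

lemma pow_order (P : MvPowerSeries (Fin 3) ℂ)
    (hz : ∀ u : Fin 3 →₀ ℕ, u 0 ≠ 0 → MvPowerSeries.coeff u P = 0)
    (h0 : MvPowerSeries.coeff 0 P = 0) :
    ∀ (l : ℕ) (v : Fin 3 →₀ ℕ), v 1 = 0 →
      MvPowerSeries.coeff v (P ^ l) ≠ 0 → v 0 = 0 ∧ l ≤ v 2 := by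
  intro l
  induction l with
  | zero =>
    intro v hv h
    rw [pow_zero, MvPowerSeries.coeff_one] at h
    have : v = 0 := by by_contra hc; rw [if_neg hc] at h; exact h rfl
    subst this
    simp
  | succ n ih =>
    intro v hv h
    rw [pow_succ', MvPowerSeries.coeff_mul] at h
    obtain ⟨p, hp, hne⟩ := Finset.exists_ne_zero_of_sum_ne_zero h
    rw [Finset.HasAntidiagonal.mem_antidiagonal] at hp
    have hadd : ∀ i, p.1 i + p.2 i = v i := fun i => by
      rw [← Finsupp.add_apply, hp]
    have hl := left_ne_zero_of_mul hne
    have hr := right_ne_zero_of_mul hne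
    have h10 : p.1 0 = 0 := by
      by_contra hc; exact hl (hz p.1 hc)
    have h11 : p.1 1 = 0 := by have := hadd 1; omega
    have h1ne : p.1 ≠ 0 := by
      intro hc; rw [hc] at hl; exact hl h0
    have h12 : 1 ≤ p.1 2 := by
      rcases Nat.eq_zero_or_pos (p.1 2) with hc | hc
      · exfalso; apply h1ne
        rw [fin3_eq_iff]
        simp [h10, h11, hc]
      · exact hc
    have h2 := ih p.2 (by have := hadd 1; omega) hr
    have e0 := hadd 0
    have e2 := hadd 2
    constructor <;> omega

lemma rhs_term_zero {m j : ℕ} (hj : j ≤ m)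
    (A B C : MvPowerSeries (Fin 3) ℂ)
    (hBz : ∀ u : Fin 3 →₀ ℕ, u 0 ≠ 0 → MvPowerSeries.coeff u B = 0)
    (hB0 : MvPowerSeries.coeff 0 B = 0)
    (hCz : ∀ u : Fin 3 →₀ ℕ, u 0 ≠ 0 → MvPowerSeries.coeff u C = 0)
    (hC0 : MvPowerSeries.coeff 0 C = 0)
    (k l n : ℕ) (hl : 1 ≤ l) (hn : m ≤ n) :
    MvPowerSeries.coeff (idx 1 0 j) (A ^ k * B ^ l * C ^ n) = 0 := by
  by_contra h
  rw [MvPowerSeries.coeff_mul] at h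
  obtain ⟨p, hp, hne⟩ := Finset.exists_ne_zero_of_sum_ne_zero h
  rw [Finset.HasAntidiagonal.mem_antidiagonal] at hp
  have hadd : ∀ i, p.1 i + p.2 i = idx 1 0 j i := fun i => by
    rw [← Finsupp.add_apply, hp]
  have hC := pow_order C hCz hC0 n p.2
    (by have := hadd 1; rw [idx_app1] at this; omega)
    (right_ne_zero_of_mul hne)
  have h2 := left_ne_zero_of_mul hne
  rw [MvPowerSeries.coeff_mul] at h2
  obtain ⟨q, hq, hqne⟩ := Finset.exists_ne_zero_of_sum_ne_zero h2
  rw [Finset.HasAntidiagonal.mem_antidiagonal] at hq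
  have hqadd : ∀ i, q.1 i + q.2 i = p.1 i := fun i => by
    rw [← Finsupp.add_apply, hq]
  have hB := pow_order B hBz hB0 l q.2
    (by have h1 := hadd 1; have h1' := hqadd 1; rw [idx_app1] at h1; omega)
    (right_ne_zero_of_mul hqne)
  have t1 := hadd 2
  have t2 := hqadd 2
  rw [idx_app2] at t1
  omega

open MvPowerSeries

lemma rhs_coeff {m : ℕ} {ε : ℤ} {Θs : ℕ → ℕ → PowerSeries ℂ}
    {ρs : MvPowerSeries (Fin 3) ℂ} (hρs : IsDefiningSeries m ε Θs ρs)
    (A B C : MvPowerSeries (Fin 3) ℂ)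
    (hBz : ∀ u : Fin 3 →₀ ℕ, u 0 ≠ 0 → MvPowerSeries.coeff u B = 0)
    (hB0 : MvPowerSeries.coeff 0 B = 0)
    (hCz : ∀ u : Fin 3 →₀ ℕ, u 0 ≠ 0 → MvPowerSeries.coeff u C = 0)
    (hC0 : MvPowerSeries.coeff 0 C = 0)
    (j : ℕ) (hj : j ≤ m) :
    MvPowerSeries.coeff (idx 1 0 j) (msubst ![A, B, C] ρs) = 0 := by
  rw [coeff_msubst]
  have hterm : ∀ e : Fin 3 →₀ ℕ,
      MvPowerSeries.coeff e ρs *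
        MvPowerSeries.coeff (idx 1 0 j) (∏ i, ![A, B, C] i ^ e i) = 0 := by
    intro e
    rcases eq_or_ne (MvPowerSeries.coeff e ρs) 0 with h | h
    · rw [h, zero_mul]
    have hfam : (e 0 = 0 ∧ e 1 = 0 ∧ e 2 = 1) ∨ (1 ≤ e 1 ∧ m ≤ e 2) := by
      have h' := hρs (e 0) (e 1) (e 2)
      rw [← fin3_eq] at h'
      rw [h'] at h
      split_ifs at h with hA hB hC hD hE hF <;>
        first
          | exact absurd rfl h
          | (left; exact ⟨hA.1, hA.2, hB⟩)
          | (right; constructor <;> omega)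
    rw [Fin.prod_univ_three]
    simp only [Matrix.cons_val_zero, Matrix.cons_val_one, Matrix.head_cons,
      Matrix.cons_val_two, Matrix.tail_cons]
    rcases hfam with ⟨h0, h1, h2⟩ | ⟨h1, h2⟩
    · rw [h0, h1, h2]
      simp only [pow_zero, one_mul, pow_one]
      rw [hCz _ (by rw [idx_app0]; omega), mul_zero]
    · rw [rhs_term_zero hj A B C hBz hB0 hCz hC0 (e 0) (e 1) (e 2) h1 h2, mul_zero]
  rw [tsum_congr hterm, tsum_zero]


end FormalAux

theorem formal_map_Gz_vanishes_to_order_m_plus_one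
    (m : ℕ) (hm : 1 ≤ m) (ε : ℤ) (hε : ε = 1 ∨ ε = -1)
    (Θ Θs : ℕ → ℕ → PowerSeries ℂ)
    (F G : MvPowerSeries (Fin 2) ℂ) (ρ ρs : MvPowerSeries (Fin 3) ℂ)
    (hρ : IsDefiningSeries m ε Θ ρ) (hρs : IsDefiningSeries m ε Θs ρs)
    (hF0 : MvPowerSeries.coeff 0 F = 0) (hG0 : MvPowerSeries.coeff 0 G = 0)
    (hJac : (Matrix.det
      !![MvPowerSeries.coeff (Finsupp.single 0 1) F,
         MvPowerSeries.coeff (Finsupp.single 1 1) F;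
         MvPowerSeries.coeff (Finsupp.single 0 1) G,
         MvPowerSeries.coeff (Finsupp.single 1 1) G]) ≠ 0)
    (hmap : MapsInto F G ρ ρs) :
    -- the coefficient of `z w^j` in `G` vanishes for all `j ≤ m`,
    -- i.e. `G_z(0, w) = O(w^{m+1})`
    ∀ j : ℕ, j ≤ m →
      MvPowerSeries.coeff (Finsupp.single 0 1 + Finsupp.single 1 j) G = 0 := by
  intro j hj
  have key := congrArg (fun s => MvPowerSeries.coeff (idx 1 0 j) s) hmap
  rw [FormalAux.lhs_coeff hρ] at key
  rw [FormalAux.rhs_coeff hρs _ _ _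
    (fun u hu => FormalAux.coeff_X12 (conj2 F) u hu)
    (by rw [FormalAux.coeff0_X12, conj2, MvPowerSeries.coeff_map, hF0, map_zero])
    (fun u hu => FormalAux.coeff_X12 (conj2 G) u hu)
    (by rw [FormalAux.coeff0_X12, conj2, MvPowerSeries.coeff_map, hG0, map_zero])
    j hj] at key
  exact key

end
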